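/- Let n ≥ 4 be an integer and let 𝓘 = {I ⊆ {1,…,n} : 1 ∈ I and 2 ≤ |I| ≤ n − 2}. Call two elements I, J ∈ 𝓘 compatible if I ⊆ J, or J ⊆ I, or I ∪ J = {1,…,n}. If σ ⊆ 𝓘 is pairwise compatible and |σ| < n − 3, then there exists K ∈ 𝓘 with K ∉ σ such that σ ∪ {K} is pairwise compatible. Consequently, every maximal (with respect to inclusion) pairwise-compatible subset of 𝓘 has exactly n − 3 elements. -/

import Mathlib

private lemma insert_compat {F : Finset (Finset ℕ)} {K : Finset ℕ}
    (h2 : ∀ X ∈ F, ∀ Y ∈ F, X ⊆ Y ∨ Y ⊆ X ∨ X ∩ Y = ∅)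
    (hK : ∀ X ∈ F, K ⊆ X ∨ X ⊆ K ∨ K ∩ X = ∅) :
    ∀ X ∈ insert K F, ∀ Y ∈ insert K F, X ⊆ Y ∨ Y ⊆ X ∨ X ∩ Y = ∅ := by
  intro X hX Y hY
  rcases Finset.mem_insert.mp hX with hX' | hX'
  · subst hX'
    rcases Finset.mem_insert.mp hY with hY' | hY'
    · subst hY'; exact Or.inl subset_rfl
    · exact hK Y hY'
  · rcases Finset.mem_insert.mp hY with hY' | hY'
    · subst hY'
      rcases hK X hX' with h | h | h
      · exact Or.inr (Or.inl h)
      · exact Or.inl h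
      · exact Or.inr (Or.inr (by rwa [Finset.inter_comm]))
    · exact h2 X hX' Y hY'

private lemma lam_bound (S : Finset ℕ) :
    ∀ F : Finset (Finset ℕ),
      (∀ X ∈ F, X ⊆ S ∧ 2 ≤ X.card) →
      (∀ X ∈ F, ∀ Y ∈ F, X ⊆ Y ∨ Y ⊆ X ∨ X ∩ Y = ∅) →
      F.card ≤ S.card - 1 ∧ (S ∉ F → F.card ≤ S.card - 2) := by
  induction S using Finset.strongInduction with
  | _ S IH =>
    have key : ∀ G : Finset (Finset ℕ),
        (∀ X ∈ G, X ⊆ S ∧ 2 ≤ X.card) →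
        (∀ X ∈ G, ∀ Y ∈ G, X ⊆ Y ∨ Y ⊆ X ∨ X ∩ Y = ∅) →
        S ∉ G → G.card ≤ S.card - 2 := by
      intro G h1 h2 hS
      rcases G.eq_empty_or_nonempty with rfl | hne
      · simp
      obtain ⟨M, hM, hmax⟩ := G.exists_maximal hne
      have hMS : M ⊆ S := (h1 M hM).1
      have hM2 : 2 ≤ M.card := (h1 M hM).2
      have hMne : M ≠ S := fun h => hS (h ▸ hM)
      have hMlt : M ⊂ S := hMS.ssubset_of_ne hMne
      set C := S \ M with hCdef
      have hClt : C ⊂ S :=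
        Finset.sdiff_ssubset hMS (Finset.card_pos.mp (by omega))
      classical
      set G1 := G.filter (fun X => X ⊆ M) with hG1
      set G2 := G.filter (fun X => ¬ X ⊆ M) with hG2
      have hsplit : G1.card + G2.card = G.card :=
        Finset.card_filter_add_card_filter_not _
      have hG2C : ∀ X ∈ G2, X ⊆ C := by
        intro X hX
        rw [hG2, Finset.mem_filter] at hX
        obtain ⟨hXG, hXM⟩ := hX
        rcases h2 X hXG M hM with h | h | h
        · exact absurd h hXM
        · exact absurd (hmax hXG h) hXM
        · intro a ha
          rw [hCdef, Finset.mem_sdiff]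
          refine ⟨(h1 X hXG).1 ha, fun haM => ?_⟩
          have : a ∈ X ∩ M := Finset.mem_inter.mpr ⟨ha, haM⟩
          simp [h] at this
      have b1 : G1.card ≤ M.card - 1 := by
        refine (IH M hMlt G1 ?_ ?_).1
        · intro X hX
          rw [hG1, Finset.mem_filter] at hX
          exact ⟨hX.2, (h1 X hX.1).2⟩
        · intro X hX Y hY
          rw [hG1, Finset.mem_filter] at hX hY
          exact h2 X hX.1 Y hY.1
      have b2 : G2.card ≤ C.card - 1 := by
        refine (IH C hClt G2 ?_ ?_).1
        · intro X hX
          refine ⟨hG2C X hX, ?_⟩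
          rw [hG2, Finset.mem_filter] at hX
          exact (h1 X hX.1).2
        · intro X hX Y hY
          rw [hG2, Finset.mem_filter] at hX hY
          exact h2 X hX.1 Y hY.1
      have hCcard : C.card = S.card - M.card := Finset.card_sdiff_of_subset hMS
      have hMleS : M.card ≤ S.card := Finset.card_le_card hMS
      have hCpos : 1 ≤ C.card := Finset.card_pos.mpr (Finset.exists_of_ssubset hMlt |>.imp
        (fun a h => Finset.mem_sdiff.mpr ⟨h.1, h.2⟩))
      omega
    intro F h1 h2
    refine ⟨?_, key F h1 h2⟩
    by_cases hS : S ∈ F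
    · have hS2 : 2 ≤ S.card := (h1 S hS).2
      have : (F.erase S).card ≤ S.card - 2 := by
        refine key (F.erase S) ?_ ?_ (Finset.notMem_erase _ _)
        · exact fun X hX => h1 X (Finset.mem_of_mem_erase hX)
        · exact fun X hX Y hY => h2 X (Finset.mem_of_mem_erase hX) Y (Finset.mem_of_mem_erase hY)
      have := Finset.card_erase_of_mem hS
      omega
    · have := key F h1 h2 hS
      omega

private lemma lam_extend (S : Finset ℕ) :
    ∀ F : Finset (Finset ℕ),
      (∀ X ∈ F, X ⊆ S ∧ 2 ≤ X.card) →
      (∀ X ∈ F, ∀ Y ∈ F, X ⊆ Y ∨ Y ⊆ X ∨ X ∩ Y = ∅) →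
      F.card < S.card - 1 →
      ∃ K : Finset ℕ, K ⊆ S ∧ 2 ≤ K.card ∧ K ∉ F ∧
        (∀ X ∈ insert K F, ∀ Y ∈ insert K F, X ⊆ Y ∨ Y ⊆ X ∨ X ∩ Y = ∅) := by
  induction S using Finset.strongInduction with
  | _ S IH =>
    intro F h1 h2 hcard
    have hS2 : 2 ≤ S.card := by omega
    by_cases hS : S ∈ F
    · classical
      set F0 := F.erase S with hF0def
      have hF0card : F0.card = F.card - 1 := Finset.card_erase_of_mem hS
      have hF0sub : ∀ X ∈ F0, X ∈ F := fun X hX => Finset.mem_of_mem_erase hX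
      rcases F0.eq_empty_or_nonempty with h0 | h0
      · -- pick a 2-element subset of S
        have hF1 : 1 ≤ F.card := Finset.card_pos.mpr ⟨S, hS⟩
        have hS3 : 3 ≤ S.card := by omega
        obtain ⟨a, ha, b, hb, hab⟩ := Finset.one_lt_card.mp (by omega : 1 < S.card)
        refine ⟨{a, b}, ?_, ?_, ?_, ?_⟩
        · intro x hx; rcases Finset.mem_insert.mp hx with rfl | hx
          · exact ha
          · rwa [Finset.mem_singleton.mp hx]
        · rw [Finset.card_insert_of_notMem (by simpa using hab), Finset.card_singleton]
        · intro hmem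
          have hne : ({a, b} : Finset ℕ) ≠ S := by
            intro h
            have : ({a,b} : Finset ℕ).card = S.card := by rw [h]
            rw [Finset.card_insert_of_notMem (by simpa using hab), Finset.card_singleton] at this
            omega
          have hmem0 : ({a, b} : Finset ℕ) ∈ F0 := by
            rw [hF0def]; exact Finset.mem_erase.mpr ⟨hne, hmem⟩
          rw [h0] at hmem0
          exact Finset.notMem_empty _ hmem0
        · refine insert_compat h2 ?_
          intro X hX
          have hXS : X = S := by
            by_contra hne
            have hmem0 : X ∈ F0 := by
              rw [hF0def]; exact Finset.mem_erase.mpr ⟨hne, hX⟩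
            rw [h0] at hmem0
            exact Finset.notMem_empty _ hmem0
          subst hXS
          left
          intro x hx; rcases Finset.mem_insert.mp hx with rfl | hx
          · exact ha
          · rwa [Finset.mem_singleton.mp hx]
      · obtain ⟨M, hM, hmax⟩ := F0.exists_maximal h0
        have hMF : M ∈ F := hF0sub M hM
        have hMS : M ⊆ S := (h1 M hMF).1
        have hM2 : 2 ≤ M.card := (h1 M hMF).2
        have hMne : M ≠ S := (Finset.mem_erase.mp hM).1
        have hMlt : M ⊂ S := hMS.ssubset_of_ne hMne
        set C := S \ M with hCdef
        have hClt : C ⊂ S :=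
          Finset.sdiff_ssubset hMS (Finset.card_pos.mp (by omega))
        set G1 := F0.filter (fun X => X ⊆ M) with hG1
        set G2 := F0.filter (fun X => ¬ X ⊆ M) with hG2
        have hsplit : G1.card + G2.card = F0.card :=
          Finset.card_filter_add_card_filter_not _
        have hG2C : ∀ X ∈ G2, X ⊆ C := by
          intro X hX
          rw [hG2, Finset.mem_filter] at hX
          obtain ⟨hXG, hXM⟩ := hX
          rcases h2 X (hF0sub X hXG) M hMF with h | h | h
          · exact absurd h hXM
          · exact absurd (hmax hXG h) hXM
          · intro a ha
            rw [hCdef, Finset.mem_sdiff]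
            refine ⟨(h1 X (hF0sub X hXG)).1 ha, fun haM => ?_⟩
            have : a ∈ X ∩ M := Finset.mem_inter.mpr ⟨ha, haM⟩
            simp [h] at this
        have hG1M : ∀ X ∈ G1, X ∈ F0 ∧ X ⊆ M := by
          intro X hX; rw [hG1, Finset.mem_filter] at hX; exact hX
        have hCcard : C.card = S.card - M.card := Finset.card_sdiff_of_subset hMS
        have hMleS : M.card ≤ S.card := Finset.card_le_card hMS
        have hCpos : 1 ≤ C.card := Finset.card_pos.mpr (Finset.exists_of_ssubset hMlt |>.imp
          (fun a h => Finset.mem_sdiff.mpr ⟨h.1, h.2⟩))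
        have hcases : G1.card < M.card - 1 ∨ G2.card < C.card - 1 := by omega
        rcases hcases with hc | hc
        · obtain ⟨K, hKM, hK2, hKG1, hKlam⟩ := IH M hMlt G1
            (fun X hX => ⟨(hG1M X hX).2, (h1 X (hF0sub X (hG1M X hX).1)).2⟩)
            (fun X hX Y hY => h2 X (hF0sub X (hG1M X hX).1) Y (hF0sub Y (hG1M Y hY).1)) hc
          have hKcard : K.card < S.card :=
            lt_of_le_of_lt (Finset.card_le_card hKM) (Finset.card_lt_card hMlt)
          refine ⟨K, hKM.trans hMS, hK2, ?_, ?_⟩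
          · intro hKF
            have hKne : K ≠ S := fun e => by rw [e] at hKcard; omega
            exact hKG1 (Finset.mem_filter.mpr ⟨Finset.mem_erase.mpr ⟨hKne, hKF⟩, hKM⟩)
          · refine insert_compat h2 ?_
            intro X hX
            by_cases hXS : X = S
            · subst hXS; exact Or.inl (hKM.trans hMS)
            · have hXF0 : X ∈ F0 := Finset.mem_erase.mpr ⟨hXS, hX⟩
              by_cases hXM : X ⊆ M
              · exact hKlam K (Finset.mem_insert_self _ _) X
                  (Finset.mem_insert_of_mem (Finset.mem_filter.mpr ⟨hXF0, hXM⟩))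
              · have hXC : X ⊆ C := hG2C X (Finset.mem_filter.mpr ⟨hXF0, hXM⟩)
                right; right
                apply Finset.eq_empty_of_forall_notMem
                intro a ha
                rw [Finset.mem_inter] at ha
                have h1a := hKM ha.1
                have h2a := hXC ha.2
                rw [hCdef, Finset.mem_sdiff] at h2a
                exact h2a.2 h1a
        · obtain ⟨K, hKC, hK2, hKG2, hKlam⟩ := IH C hClt G2
            (fun X hX => ⟨hG2C X hX, (h1 X (hF0sub X (Finset.mem_filter.mp hX).1)).2⟩)
            (fun X hX Y hY => h2 X (hF0sub X (Finset.mem_filter.mp hX).1)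
              Y (hF0sub Y (Finset.mem_filter.mp hY).1)) hc
          have hKcard : K.card < S.card :=
            lt_of_le_of_lt (Finset.card_le_card hKC) (Finset.card_lt_card hClt)
          have hKdisjM : ∀ a ∈ K, a ∉ M := by
            intro a ha haM
            have := hKC ha
            rw [hCdef, Finset.mem_sdiff] at this
            exact this.2 haM
          refine ⟨K, hKC.trans hClt.subset, hK2, ?_, ?_⟩
          · intro hKF
            have hKne : K ≠ S := fun e => by rw [e] at hKcard; omega
            have hKF0 : K ∈ F0 := Finset.mem_erase.mpr ⟨hKne, hKF⟩
            have hKnM : ¬ K ⊆ M := by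
              intro h
              obtain ⟨a, ha⟩ := Finset.card_pos.mp (by omega : 0 < K.card)
              exact hKdisjM a ha (h ha)
            exact hKG2 (Finset.mem_filter.mpr ⟨hKF0, hKnM⟩)
          · refine insert_compat h2 ?_
            intro X hX
            by_cases hXS : X = S
            · subst hXS; exact Or.inl (hKC.trans hClt.subset)
            · have hXF0 : X ∈ F0 := Finset.mem_erase.mpr ⟨hXS, hX⟩
              by_cases hXM : X ⊆ M
              · right; right
                apply Finset.eq_empty_of_forall_notMem
                intro a ha
                rw [Finset.mem_inter] at ha
                exact hKdisjM a ha.1 (hXM ha.2)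
              · exact hKlam K (Finset.mem_insert_self _ _) X
                  (Finset.mem_insert_of_mem (Finset.mem_filter.mpr ⟨hXF0, hXM⟩))
    · refine ⟨S, subset_rfl, hS2, hS, ?_⟩
      refine insert_compat h2 ?_
      intro X hX
      exact Or.inr (Or.inl (h1 X hX).1)

private lemma part1 (n : ℕ) (hn : 4 ≤ n) (σ : Finset (Finset ℕ))
    (h1 : ∀ I ∈ σ, I ⊆ Finset.Icc 1 n ∧ 1 ∈ I ∧ 2 ≤ I.card ∧ I.card ≤ n - 2)
    (h2 : ∀ I ∈ σ, ∀ J ∈ σ, I ⊆ J ∨ J ⊆ I ∨ I ∪ J = Finset.Icc 1 n)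
    (hcard : σ.card < n - 3) :
    ∃ K : Finset ℕ,
      K ⊆ Finset.Icc 1 n ∧ 1 ∈ K ∧ 2 ≤ K.card ∧ K.card ≤ n - 2 ∧ K ∉ σ ∧
      (∀ I ∈ insert K σ, ∀ J ∈ insert K σ,
        I ⊆ J ∨ J ⊆ I ∨ I ∪ J = Finset.Icc 1 n) := by
  classical
  set N := Finset.Icc 1 n with hNdef
  set S := Finset.Icc 2 n with hSdef
  have hNcard : N.card = n := by rw [hNdef, Nat.card_Icc]; omega
  have hScard : S.card = n - 1 := by rw [hSdef, Nat.card_Icc]; omega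
  have hSN : S ⊆ N := Finset.Icc_subset_Icc (by omega) le_rfl
  have h1S : (1 : ℕ) ∉ S := by rw [hSdef, Finset.mem_Icc]; omega
  have h1N : (1 : ℕ) ∈ N := by rw [hNdef, Finset.mem_Icc]; omega
  set F := σ.image (fun I => N \ I) with hFdef
  have hcompl_sub : ∀ I ∈ σ, N \ I ⊆ S := by
    intro I hI x hx
    rw [Finset.mem_sdiff, hNdef, Finset.mem_Icc] at hx
    rw [hSdef, Finset.mem_Icc]
    have h1I := (h1 I hI).2.1
    constructor
    · rcases Nat.lt_or_ge x 2 with h | h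
      · exfalso; have : x = 1 := by omega
        exact hx.2 (this ▸ h1I)
      · exact h
    · exact hx.1.2
  have hcompl_card : ∀ I ∈ σ, (N \ I).card = n - I.card := by
    intro I hI
    rw [Finset.card_sdiff_of_subset (h1 I hI).1, hNcard]
  have hFmem : ∀ X ∈ F, ∃ I ∈ σ, N \ I = X := by
    intro X hX; simpa [hFdef] using hX
  have hFcond : ∀ X ∈ F, X ⊆ S ∧ 2 ≤ X.card := by
    intro X hX
    obtain ⟨I, hI, rfl⟩ := hFmem X hX
    refine ⟨hcompl_sub I hI, ?_⟩
    rw [hcompl_card I hI]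
    have := (h1 I hI).2.2.2
    omega
  have hFlam : ∀ X ∈ F, ∀ Y ∈ F, X ⊆ Y ∨ Y ⊆ X ∨ X ∩ Y = ∅ := by
    intro X hX Y hY
    obtain ⟨I, hI, rfl⟩ := hFmem X hX
    obtain ⟨J, hJ, rfl⟩ := hFmem Y hY
    rcases h2 I hI J hJ with h | h | h
    · exact Or.inr (Or.inl (Finset.sdiff_subset_sdiff subset_rfl h))
    · exact Or.inl (Finset.sdiff_subset_sdiff subset_rfl h)
    · refine Or.inr (Or.inr (Finset.eq_empty_of_forall_notMem ?_))
      intro a ha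
      rw [Finset.mem_inter, Finset.mem_sdiff, Finset.mem_sdiff] at ha
      have : a ∈ I ∪ J := h ▸ ha.1.1
      rcases Finset.mem_union.mp this with h' | h'
      · exact ha.1.2 h'
      · exact ha.2.2 h'
  have hFcard : F.card = σ.card := by
    rw [hFdef]
    apply Finset.card_image_of_injOn
    intro I hI J hJ h
    have e : N \ (N \ I) = N \ (N \ J) := by simp only at h; rw [h]
    rwa [Finset.sdiff_sdiff_eq_self (h1 I hI).1,
      Finset.sdiff_sdiff_eq_self (h1 J hJ).1] at e
  have hSnF : S ∉ F := by
    intro hS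
    obtain ⟨I, hI, hIe⟩ := hFmem S hS
    have : (N \ I).card = n - I.card := hcompl_card I hI
    rw [hIe, hScard] at this
    have := (h1 I hI).2.2.1
    omega
  -- extend insert S F
  have hF'cond : ∀ X ∈ insert S F, X ⊆ S ∧ 2 ≤ X.card := by
    intro X hX
    rcases Finset.mem_insert.mp hX with rfl | hX
    · exact ⟨subset_rfl, by omega⟩
    · exact hFcond X hX
  have hF'lam : ∀ X ∈ insert S F, ∀ Y ∈ insert S F, X ⊆ Y ∨ Y ⊆ X ∨ X ∩ Y = ∅ :=
    insert_compat hFlam (fun X hX => Or.inr (Or.inl (hFcond X hX).1))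
  have hF'card : (insert S F).card < S.card - 1 := by
    rw [Finset.card_insert_of_notMem hSnF, hFcard]
    omega
  obtain ⟨K, hKS, hK2, hKF', hKlam⟩ := lam_extend S (insert S F) hF'cond hF'lam hF'card
  have hKneS : K ≠ S := fun e => hKF' (e ▸ Finset.mem_insert_self _ _)
  have hKcard : K.card < S.card := Finset.card_lt_card (hKS.ssubset_of_ne hKneS)
  have hKN : K ⊆ N := hKS.trans hSN
  set L := N \ K with hLdef
  have hLcard : L.card = n - K.card := by rw [hLdef, Finset.card_sdiff_of_subset hKN, hNcard]
  have hLN : L ⊆ N := Finset.sdiff_subset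
  have h1L : 1 ∈ L := Finset.mem_sdiff.mpr ⟨h1N, fun h => h1S (hKS h)⟩
  have hNL : N \ L = K := Finset.sdiff_sdiff_eq_self hKN
  have hLnσ : L ∉ σ := by
    intro hL
    have : N \ L ∈ F := by rw [hFdef]; exact Finset.mem_image_of_mem _ hL
    rw [hNL] at this
    exact hKF' (Finset.mem_insert_of_mem this)
  refine ⟨L, hLN, h1L, by omega, by omega, hLnσ, ?_⟩
  have hmem : ∀ I ∈ insert L σ, I ⊆ N ∧ N \ I ∈ insert K (insert S F) := by
    intro I hI
    rcases Finset.mem_insert.mp hI with rfl | hI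
    · exact ⟨hLN, by rw [hNL]; exact Finset.mem_insert_self _ _⟩
    · refine ⟨(h1 I hI).1, ?_⟩
      refine Finset.mem_insert_of_mem (Finset.mem_insert_of_mem ?_)
      rw [hFdef]; exact Finset.mem_image_of_mem _ hI
  intro I hI J hJ
  obtain ⟨hIN, hCI⟩ := hmem I hI
  obtain ⟨hJN, hCJ⟩ := hmem J hJ
  rcases hKlam _ hCI _ hCJ with h | h | h
  · refine Or.inr (Or.inl ?_)
    have := Finset.sdiff_subset_sdiff (Finset.Subset.refl N) h
    rwa [Finset.sdiff_sdiff_eq_self hIN, Finset.sdiff_sdiff_eq_self hJN] at this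
  · refine Or.inl ?_
    have := Finset.sdiff_subset_sdiff (Finset.Subset.refl N) h
    rwa [Finset.sdiff_sdiff_eq_self hIN, Finset.sdiff_sdiff_eq_self hJN] at this
  · refine Or.inr (Or.inr ?_)
    apply Finset.Subset.antisymm (Finset.union_subset hIN hJN)
    intro a ha
    rw [Finset.mem_union]
    by_contra hcon
    push_neg at hcon
    have haI : a ∈ N \ I := Finset.mem_sdiff.mpr ⟨ha, hcon.1⟩
    have haJ : a ∈ N \ J := Finset.mem_sdiff.mpr ⟨ha, hcon.2⟩
    have : a ∈ (N \ I) ∩ (N \ J) := Finset.mem_inter.mpr ⟨haI, haJ⟩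
    rw [h] at this
    exact Finset.notMem_empty _ this


private lemma part2bound (n : ℕ) (hn : 4 ≤ n) (σ : Finset (Finset ℕ))
    (h1 : ∀ I ∈ σ, I ⊆ Finset.Icc 1 n ∧ 1 ∈ I ∧ 2 ≤ I.card ∧ I.card ≤ n - 2)
    (h2 : ∀ I ∈ σ, ∀ J ∈ σ, I ⊆ J ∨ J ⊆ I ∨ I ∪ J = Finset.Icc 1 n) :
    σ.card ≤ n - 3 := by
  classical
  set N := Finset.Icc 1 n with hNdef
  set S := Finset.Icc 2 n with hSdef
  have hNcard : N.card = n := by rw [hNdef, Nat.card_Icc]; omega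
  have hScard : S.card = n - 1 := by rw [hSdef, Nat.card_Icc]; omega
  set F := σ.image (fun I => N \ I) with hFdef
  have hcompl_sub : ∀ I ∈ σ, N \ I ⊆ S := by
    intro I hI x hx
    rw [Finset.mem_sdiff, hNdef, Finset.mem_Icc] at hx
    rw [hSdef, Finset.mem_Icc]
    have h1I := (h1 I hI).2.1
    constructor
    · rcases Nat.lt_or_ge x 2 with h | h
      · exfalso; have : x = 1 := by omega
        exact hx.2 (this ▸ h1I)
      · exact h
    · exact hx.1.2
  have hcompl_card : ∀ I ∈ σ, (N \ I).card = n - I.card := by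
    intro I hI
    rw [Finset.card_sdiff_of_subset (h1 I hI).1, hNcard]
  have hFmem : ∀ X ∈ F, ∃ I ∈ σ, N \ I = X := by
    intro X hX; simpa [hFdef] using hX
  have hFcond : ∀ X ∈ F, X ⊆ S ∧ 2 ≤ X.card := by
    intro X hX
    obtain ⟨I, hI, rfl⟩ := hFmem X hX
    refine ⟨hcompl_sub I hI, ?_⟩
    rw [hcompl_card I hI]
    have := (h1 I hI).2.2.2
    omega
  have hFlam : ∀ X ∈ F, ∀ Y ∈ F, X ⊆ Y ∨ Y ⊆ X ∨ X ∩ Y = ∅ := by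
    intro X hX Y hY
    obtain ⟨I, hI, rfl⟩ := hFmem X hX
    obtain ⟨J, hJ, rfl⟩ := hFmem Y hY
    rcases h2 I hI J hJ with h | h | h
    · exact Or.inr (Or.inl (Finset.sdiff_subset_sdiff subset_rfl h))
    · exact Or.inl (Finset.sdiff_subset_sdiff subset_rfl h)
    · refine Or.inr (Or.inr (Finset.eq_empty_of_forall_notMem ?_))
      intro a ha
      rw [Finset.mem_inter, Finset.mem_sdiff, Finset.mem_sdiff] at ha
      have : a ∈ I ∪ J := h ▸ ha.1.1
      rcases Finset.mem_union.mp this with h' | h'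
      · exact ha.1.2 h'
      · exact ha.2.2 h'
  have hFcard : F.card = σ.card := by
    rw [hFdef]
    apply Finset.card_image_of_injOn
    intro I hI J hJ h
    have e : N \ (N \ I) = N \ (N \ J) := by simp only at h; rw [h]
    rwa [Finset.sdiff_sdiff_eq_self (h1 I hI).1,
      Finset.sdiff_sdiff_eq_self (h1 J hJ).1] at e
  have hSnF : S ∉ F := by
    intro hS
    obtain ⟨I, hI, hIe⟩ := hFmem S hS
    have : (N \ I).card = n - I.card := hcompl_card I hI
    rw [hIe, hScard] at this
    have := (h1 I hI).2.2.1
    omega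
  have := (lam_bound S F hFcond hFlam).2 hSnF
  omega

/-- If `σ` is a pairwise-compatible subset of
`𝓘 = {I ⊆ {1,…,n} : 1 ∈ I, 2 ≤ |I| ≤ n − 2}` (where `I, J` are compatible if `I ⊆ J`,
`J ⊆ I`, or `I ∪ J = {1,…,n}`) with `|σ| < n − 3`, then `σ` can be extended by a new
element `K ∈ 𝓘` to a pairwise-compatible set.  Consequently, every maximal
pairwise-compatible subset of `𝓘` has exactly `n − 3` elements. -/
theorem compatible_extend_and_maximal_card (n : ℕ) (hn : 4 ≤ n) :
    (∀ σ : Finset (Finset ℕ),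
      (∀ I ∈ σ, I ⊆ Finset.Icc 1 n ∧ 1 ∈ I ∧ 2 ≤ I.card ∧ I.card ≤ n - 2) →
      (∀ I ∈ σ, ∀ J ∈ σ, I ⊆ J ∨ J ⊆ I ∨ I ∪ J = Finset.Icc 1 n) →
      σ.card < n - 3 →
      ∃ K : Finset ℕ,
        K ⊆ Finset.Icc 1 n ∧ 1 ∈ K ∧ 2 ≤ K.card ∧ K.card ≤ n - 2 ∧ K ∉ σ ∧
        (∀ I ∈ insert K σ, ∀ J ∈ insert K σ,
          I ⊆ J ∨ J ⊆ I ∨ I ∪ J = Finset.Icc 1 n))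
    ∧
    (∀ σ : Finset (Finset ℕ),
      (∀ I ∈ σ, I ⊆ Finset.Icc 1 n ∧ 1 ∈ I ∧ 2 ≤ I.card ∧ I.card ≤ n - 2) →
      (∀ I ∈ σ, ∀ J ∈ σ, I ⊆ J ∨ J ⊆ I ∨ I ∪ J = Finset.Icc 1 n) →
      (∀ τ : Finset (Finset ℕ), σ ⊆ τ →
        (∀ I ∈ τ, I ⊆ Finset.Icc 1 n ∧ 1 ∈ I ∧ 2 ≤ I.card ∧ I.card ≤ n - 2) →
        (∀ I ∈ τ, ∀ J ∈ τ, I ⊆ J ∨ J ⊆ I ∨ I ∪ J = Finset.Icc 1 n) →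
        τ = σ) →
      σ.card = n - 3) := by
  constructor
  · exact fun σ h1 h2 hc => part1 n hn σ h1 h2 hc
  · intro σ h1 h2 hmax
    have hub : σ.card ≤ n - 3 := part2bound n hn σ h1 h2
    by_contra hne
    have hlt : σ.card < n - 3 := by omega
    obtain ⟨K, hKN, h1K, hK2, hKub, hKσ, hKcompat⟩ := part1 n hn σ h1 h2 hlt
    have hτ : insert K σ = σ := by
      refine hmax (insert K σ) (Finset.subset_insert _ _) ?_ hKcompat
      intro I hI
      rcases Finset.mem_insert.mp hI with rfl | hI
      · exact ⟨hKN, h1K, hK2, hKub⟩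
      · exact h1 I hI
    exact hKσ (hτ ▸ Finset.mem_insert_self K σ)
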